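/- Let (X,d) be a ν-generalized metric space and {x_n} a sequence of pairwise distinct points such that d(x_n, x_{n+1}) → 0 and d(x_n, x_{n+2}) → 0. Suppose that for every ε > 0 and for any two subsequences {x_{p_i}}, {x_{q_i}}, if limsup_{i→∞} d(x_{p_i}, x_{q_i}) ≤ ε then there exists N with d(x_{p_i+1}, x_{q_i+1}) ≤ ε for all i ≥ N. Then {x_n} is a Cauchy sequence (i.e., 1-Cauchy). -/

import Mathlib

open Filter Topology

/-- `(X,d)` is a ν-generalized metric space. -/
def NuGenMetric (ν : ℕ) {X : Type*} (d : X → X → ℝ) : Prop :=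
  (∀ x y, 0 ≤ d x y) ∧
  (∀ x y, d x y = 0 ↔ x = y) ∧
  (∀ x y, d x y = d y x) ∧
  (∀ u : Fin (ν + 2) → X, Function.Injective u →
    d (u 0) (u (Fin.last (ν + 1))) ≤ ∑ i : Fin (ν + 1), d (u i.castSucc) (u i.succ))

/-- `{x n}` is `k`-Cauchy: `lim_n sup_m d(x_n, x_{n+1+mk}) = 0` (sup taken in `[0,∞]`). -/
def IsKCauchy {X : Type*} (d : X → X → ℝ) (x : ℕ → X) (k : ℕ) : Prop :=
  Filter.Tendsto (fun n => ⨆ m : ℕ, ENNReal.ofReal (d (x n) (x (n + 1 + m * k))))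
    Filter.atTop (nhds 0)

lemma poly_bound {X : Type*} {ν : ℕ} (hν : 0 < ν) {d : X → X → ℝ}
    (hX : NuGenMetric ν d) {x : ℕ → X} (hinj : Function.Injective x)
    (ε δ : ℝ) (p q M : ℕ)
    (hp : M + ν + 1 ≤ p) (hq : p + 2 ≤ q)
    (hmin : ∀ r, p < r → r < q → d (x p) (x r) ≤ ε)
    (hsmall : ∀ n, M ≤ n → d (x n) (x (n + 1)) ≤ δ ∧ d (x n) (x (n + 2)) ≤ δ) :
    d (x (p - 1)) (x (q - 1)) ≤ ε + ν * δ := by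
  obtain ⟨hnn, heq, hsym, hpoly⟩ := hX
  set off : ℕ → ℕ := fun j => if 2 * j + 1 ≤ ν then 1 + 2 * j else 2 * ν - 2 * j with hoff
  have hoff_le : ∀ j, off j ≤ ν := by
    intro j; simp only [hoff]; split_ifs <;> omega
  have hoff_inj : ∀ j, j ≤ ν → ∀ k, k ≤ ν → off j = off k → j = k := by
    intro j hj k hk; simp only [hoff]; split_ifs <;> omega
  have hoff0 : off 0 = 1 := by simp only [hoff]; rw [if_pos (by omega)]
  have hoffν : off ν = 0 := by simp only [hoff]; rw [if_neg (by omega)]; omega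
  have hstep : ∀ j, j + 1 ≤ ν →
      off j = off (j + 1) + 2 ∨ off (j + 1) = off j + 2 ∨
      off j = off (j + 1) + 1 ∨ off (j + 1) = off j + 1 := by
    intro j hj; simp only [hoff]; split_ifs <;> omega
  set idx : ℕ → ℕ := fun j => if j ≤ ν then p - off j else q - 1 with hidx
  have hidx_le : ∀ j, j ≤ ν → idx j = p - off j := by
    intro j hj; simp only [hidx]; rw [if_pos hj]
  have hidx_top : ∀ j, ν < j → idx j = q - 1 := by
    intro j hj; simp only [hidx]; rw [if_neg (by omega)]
  have hu_inj : Function.Injective (fun i : Fin (ν + 2) => x (idx (i : ℕ))) := by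
    intro a b hab
    have h := hinj hab
    have ha := a.isLt; have hb := b.isLt
    apply Fin.ext
    by_cases haν : (a : ℕ) ≤ ν <;> by_cases hbν : (b : ℕ) ≤ ν
    · rw [hidx_le _ haν, hidx_le _ hbν] at h
      exact hoff_inj _ haν _ hbν (by have := hoff_le (a : ℕ); have := hoff_le (b : ℕ); omega)
    · rw [hidx_le _ haν, hidx_top _ (by omega)] at h
      have := hoff_le (a : ℕ); omega
    · rw [hidx_top _ (by omega), hidx_le _ hbν] at h
      have := hoff_le (b : ℕ); omega
    · omega
  have key := hpoly (fun i : Fin (ν + 2) => x (idx (i : ℕ))) hu_inj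
  simp only [Fin.coe_castSucc, Fin.val_succ, Fin.val_last, Fin.val_zero] at key
  rw [hidx_le 0 (by omega), hidx_top (ν + 1) (by omega), hoff0] at key
  refine key.trans ?_
  have hseg : ∀ j, j + 1 ≤ ν → d (x (idx j)) (x (idx (j + 1))) ≤ δ := by
    intro j hj
    rw [hidx_le j (by omega), hidx_le (j + 1) hj]
    have h1 := hoff_le j; have h2 := hoff_le (j + 1)
    have hM1 : M ≤ p - off j := by omega
    have hM2 : M ≤ p - off (j + 1) := by omega
    rcases hstep j hj with h | h | h | h
    · have he : p - off (j + 1) = (p - off j) + 2 := by omega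
      rw [he]; exact (hsmall _ hM1).2
    · have he : p - off j = (p - off (j + 1)) + 2 := by omega
      rw [he, hsym]; exact (hsmall _ hM2).2
    · have he : p - off (j + 1) = (p - off j) + 1 := by omega
      rw [he]; exact (hsmall _ hM1).1
    · have he : p - off j = (p - off (j + 1)) + 1 := by omega
      rw [he, hsym]; exact (hsmall _ hM2).1
  rw [Fin.sum_univ_castSucc]
  simp only [Fin.coe_castSucc, Fin.val_succ, Fin.val_last]
  have hlast' : d (x (idx ν)) (x (idx (ν + 1))) ≤ ε := by
    rw [hidx_le ν le_rfl, hoffν, Nat.sub_zero, hidx_top (ν + 1) (by omega)]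
    exact hmin (q - 1) (by omega) (by omega)
  have hsum : ∑ i : Fin ν, d (x (idx (i : ℕ))) (x (idx ((i : ℕ) + 1))) ≤ ν * δ := by
    calc ∑ i : Fin ν, d (x (idx (i : ℕ))) (x (idx ((i : ℕ) + 1)))
        ≤ ∑ _i : Fin ν, δ := Finset.sum_le_sum (fun i _ => hseg i i.isLt)
      _ = ν * δ := by simp [Finset.sum_const, Finset.card_univ, nsmul_eq_mul]
  linarith

theorem stmt_1 {X : Type*} (ν : ℕ) (hν : 0 < ν) (d : X → X → ℝ)
    (hX : NuGenMetric ν d) (x : ℕ → X) (hinj : Function.Injective x)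
    (hd1 : Filter.Tendsto (fun n => d (x n) (x (n + 1))) Filter.atTop (nhds 0))
    (hd2 : Filter.Tendsto (fun n => d (x n) (x (n + 2))) Filter.atTop (nhds 0))
    (hsub : ∀ ε > (0 : ℝ), ∀ p q : ℕ → ℕ, StrictMono p → StrictMono q →
      Filter.limsup (fun i => ENNReal.ofReal (d (x (p i)) (x (q i)))) Filter.atTop
        ≤ ENNReal.ofReal ε →
      ∃ N, ∀ i ≥ N, d (x (p i + 1)) (x (q i + 1)) ≤ ε) :
    IsKCauchy d x 1 := by
  classical
  have hP : ∀ ε : ℝ, 0 < ε → ∃ N, ∀ n ≥ N, ∀ m : ℕ, d (x n) (x (n + 1 + m)) ≤ ε := by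
    by_contra hc
    push_neg at hc
    obtain ⟨ε, hε, H⟩ := hc
    -- H : ∀ N, ∃ n ≥ N, ∃ m, ε < d (x n) (x (n + 1 + m))
    set good : ℕ → Prop := fun n => ∃ m, ε < d (x n) (x (n + 1 + m)) with hgooddef
    have H' : ∀ N : ℕ, ∃ n, N ≤ n ∧ good n := by
      intro N; obtain ⟨n, hn, m, hm⟩ := H N; exact ⟨n, hn, m, hm⟩
    choose g hg₁ hg₂ using H'
    obtain ⟨N₁, hN₁⟩ := eventually_atTop.1 (hd1.eventually (gt_mem_nhds hε))
    set N₀ : ℕ := max N₁ (ν + 1) with hN₀def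
    set Q : ℕ → ℕ := fun n => if h : good n then n + 1 + Nat.find h else 0 with hQdef
    set p : ℕ → ℕ := fun i => Nat.rec (g N₀) (fun _ prev => g (Q prev + 1)) i with hpdef
    have hp0 : p 0 = g N₀ := rfl
    have hpsucc : ∀ i, p (i + 1) = g (Q (p i) + 1) := fun i => rfl
    have hgood : ∀ i, good (p i) := by
      intro i; cases i with
      | zero => exact hg₂ N₀
      | succ n => exact hg₂ (Q (p n) + 1)
    set q : ℕ → ℕ := fun i => Q (p i) with hqdef
    have hq_def : ∀ i, q i = p i + 1 + Nat.find (hgood i) := by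
      intro i; simp only [hqdef, hQdef]; rw [dif_pos (hgood i)]
    have hqd : ∀ i, ε < d (x (p i)) (x (q i)) := by
      intro i; rw [hq_def i]; exact Nat.find_spec (hgood i)
    have hmin : ∀ i r, p i < r → r < q i → d (x (p i)) (x r) ≤ ε := by
      intro i r h1 h2
      have hqe := hq_def i
      have hm : r - (p i + 1) < Nat.find (hgood i) := by omega
      have := Nat.find_min (hgood i) hm
      rw [show p i + 1 + (r - (p i + 1)) = r by omega] at this
      exact not_lt.1 this
    have hpN₀ : ∀ i, N₀ ≤ p i := by
      intro i; induction i with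
      | zero => exact hg₁ N₀
      | succ n ih =>
        have h1 := hg₁ (Q (p n) + 1)
        have h2 := hq_def n
        rw [hpsucc]
        simp only [hqdef] at h2
        omega
    have hq2 : ∀ i, p i + 2 ≤ q i := by
      intro i
      by_contra h
      have hqe := hq_def i
      have hq1 : q i = p i + 1 := by omega
      have hd := hqd i
      rw [hq1] at hd
      exact absurd hd (not_lt.2 (hN₁ (p i) (le_trans (le_max_left _ _) (hpN₀ i))).le)
    have hpq : ∀ i, q i + 1 ≤ p (i + 1) := by
      intro i; rw [hpsucc]; exact hg₁ (Q (p i) + 1)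
    have hpmono : StrictMono p := by
      apply strictMono_nat_of_lt_succ
      intro i
      have := hpq i; have := hq2 i; omega
    have hν1 : ∀ i, ν + 1 ≤ p i := fun i => le_trans (le_max_right _ _) (hpN₀ i)
    have hls : Filter.limsup (fun i => ENNReal.ofReal (d (x (p i - 1)) (x (q i - 1))))
        Filter.atTop ≤ ENNReal.ofReal ε := by
      refine ENNReal.le_of_forall_pos_le_add (fun η hη _ => ?_)
      have hδ : (0 : ℝ) < (η : ℝ) / ν := div_pos (by exact_mod_cast hη) (by exact_mod_cast hν)
      have hev1 := hd1.eventually (gt_mem_nhds hδ)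
      have hev2 := hd2.eventually (gt_mem_nhds hδ)
      obtain ⟨M, hM⟩ := eventually_atTop.1 (hev1.and hev2)
      refine Filter.limsup_le_of_le (by isBoundedDefault) ?_
      filter_upwards [eventually_ge_atTop (M + ν + 1)] with i hi
      have hpi : M + ν + 1 ≤ p i := le_trans hi (hpmono.id_le i)
      have hb := poly_bound hν hX hinj ε ((η : ℝ) / ν) (p i) (q i) M hpi (hq2 i)
        (hmin i) (fun n hn => ⟨((hM n hn).1).le, ((hM n hn).2).le⟩)
      have hcalc : ε + (ν : ℝ) * ((η : ℝ) / ν) = ε + (η : ℝ) := by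
        field_simp
      rw [hcalc] at hb
      calc ENNReal.ofReal (d (x (p i - 1)) (x (q i - 1)))
          ≤ ENNReal.ofReal (ε + (η : ℝ)) := ENNReal.ofReal_le_ofReal hb
        _ = ENNReal.ofReal ε + ENNReal.ofReal (η : ℝ) :=
            ENNReal.ofReal_add hε.le (by positivity)
        _ = ENNReal.ofReal ε + η := by rw [ENNReal.ofReal_coe_nnreal]
    have hmonop : StrictMono (fun i => p i - 1) := by
      apply strictMono_nat_of_lt_succ
      intro i
      have h1 : p i < p (i + 1) := hpmono (lt_add_one i)
      have h2 := hν1 i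
      show p i - 1 < p (i + 1) - 1
      omega
    have hmonoq : StrictMono (fun i => q i - 1) := by
      apply strictMono_nat_of_lt_succ
      intro i
      have h1 := hq2 (i + 1); have h2 := hpq i; have h3 := hq2 i; have h4 := hν1 i
      show q i - 1 < q (i + 1) - 1
      omega
    obtain ⟨N, hN⟩ := hsub ε hε (fun i => p i - 1) (fun i => q i - 1) hmonop hmonoq hls
    have h := hN N le_rfl
    have h1 : 1 ≤ p N := by have := hν1 N; omega
    have h2 : 1 ≤ q N := by have := hq2 N; have := hν1 N; omega
    rw [Nat.sub_add_cancel h1, Nat.sub_add_cancel h2] at h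
    exact absurd (hqd N) (not_lt.2 h)
  -- now conclude
  simp only [IsKCauchy]
  rw [ENNReal.tendsto_nhds_zero]
  intro ε hε
  rcases eq_or_ne ε ⊤ with rfl | hεtop
  · exact Eventually.of_forall fun n => le_top
  · have hε' : 0 < ε.toReal := ENNReal.toReal_pos hε.ne' hεtop
    obtain ⟨N, hN⟩ := hP ε.toReal hε'
    filter_upwards [eventually_ge_atTop N] with n hn
    refine iSup_le fun m => ?_
    have h := hN n hn m
    calc ENNReal.ofReal (d (x n) (x (n + 1 + m * 1)))
        ≤ ENNReal.ofReal ε.toReal :=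
          ENNReal.ofReal_le_ofReal (by simpa [mul_one] using h)
      _ = ε := ENNReal.ofReal_toReal hεtop
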